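/- Let T : ℝ → ℝ be twice differentiable and satisfy T''(J) = J²·T(J)^(−5) on an open interval where T(J) > 0. Then I(J) = (J·T'(J) − T(J))² + J⁴/(2·T(J)⁴) is constant on that interval. -/

import Mathlib

lemma ef_hasDerivAt_zero (T : ℝ → ℝ) (a b : ℝ)
    (hT : ContDiff ℝ 2 T)
    (hpos : ∀ J ∈ Set.Ioo a b, 0 < T J)
    (hode : ∀ J ∈ Set.Ioo a b, deriv (deriv T) J = J ^ 2 / (T J) ^ 5) :
    ∀ J ∈ Set.Ioo a b, HasDerivAt
      (fun J => (J * deriv T J - T J) ^ 2 + J ^ 4 / (2 * (T J) ^ 4)) 0 J := by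
  intro J hJ
  have hT0 : T J ≠ 0 := (hpos J hJ).ne'
  have hdiff : Differentiable ℝ T := hT.differentiable (by norm_num)
  have hT' : ContDiff ℝ 1 (deriv T) := by
    have h := (contDiff_succ_iff_deriv.mp (by exact_mod_cast hT : ContDiff ℝ ((1:ℕ)+1) T)).2
    exact_mod_cast h.2
  have hd1 : HasDerivAt T (deriv T J) J := (hdiff J).hasDerivAt
  have hd2 : HasDerivAt (deriv T) (deriv (deriv T) J) J :=
    ((hT'.differentiable (by norm_num)) J).hasDerivAt
  have hid : HasDerivAt (fun x : ℝ => x) 1 J := hasDerivAt_id J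
  have h1 : HasDerivAt (fun x => x * deriv T x - T x)
      (1 * deriv T J + J * deriv (deriv T) J - deriv T J) J :=
    (hid.mul hd2).sub hd1
  have h2 : HasDerivAt (fun x => (x * deriv T x - T x) ^ 2)
      (2 * (J * deriv T J - T J) ^ 1 * (1 * deriv T J + J * deriv (deriv T) J - deriv T J)) J :=
    h1.pow 2
  have hx4 : HasDerivAt (fun x : ℝ => x ^ 4) (4 * J ^ 3) J := by
    simpa using (hasDerivAt_pow 4 J)
  have hden : HasDerivAt (fun x => 2 * (T x) ^ 4) (2 * (4 * (T J) ^ 3 * deriv T J)) J := by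
    simpa using ((hd1.pow 4).const_mul 2)
  have hden0 : 2 * (T J) ^ 4 ≠ 0 := by positivity
  have h3 : HasDerivAt (fun x => x ^ 4 / (2 * (T x) ^ 4))
      ((4 * J ^ 3 * (2 * (T J) ^ 4) - J ^ 4 * (2 * (4 * (T J) ^ 3 * deriv T J)))
        / (2 * (T J) ^ 4) ^ 2) J := hx4.div hden hden0
  have h := h2.add h3
  refine h.congr_deriv ?_
  rw [hode J hJ]
  field_simp
  ring

theorem emden_fowler_m_neg5_first_integral
    (T : ℝ → ℝ) (a b : ℝ)
    (hT : ContDiff ℝ 2 T)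
    (hpos : ∀ J ∈ Set.Ioo a b, 0 < T J)
    (hode : ∀ J ∈ Set.Ioo a b, deriv (deriv T) J = J ^ 2 / (T J) ^ 5) :
    ∀ J₁ ∈ Set.Ioo a b, ∀ J₂ ∈ Set.Ioo a b,
      (J₁ * deriv T J₁ - T J₁) ^ 2 + J₁ ^ 4 / (2 * (T J₁) ^ 4)
        = (J₂ * deriv T J₂ - T J₂) ^ 2 + J₂ ^ 4 / (2 * (T J₂) ^ 4) := by
  set I : ℝ → ℝ := fun J => (J * deriv T J - T J) ^ 2 + J ^ 4 / (2 * (T J) ^ 4) with hI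
  have hderiv := ef_hasDerivAt_zero T a b hT hpos hode
  have key : ∀ x y : ℝ, x ∈ Set.Ioo a b → y ∈ Set.Ioo a b → x ≤ y → I y = I x := by
    intro x y hx hy hxy
    have hsub : Set.Icc x y ⊆ Set.Ioo a b := Set.Icc_subset_Ioo hx.1 hy.2
    exact constant_of_has_deriv_right_zero
      (fun z hz => ((hderiv z (hsub hz)).continuousAt).continuousWithinAt)
      (fun z hz => ((hderiv z (hsub (Set.Ico_subset_Icc_self hz))).hasDerivWithinAt))
      y (Set.right_mem_Icc.mpr hxy)
  intro J₁ h₁ J₂ h₂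
  rcases le_total J₁ J₂ with h | h
  · exact (key J₁ J₂ h₁ h₂ h).symm
  · exact key J₂ J₁ h₂ h₁ h
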